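/- arXiv:math/0408038 — 2 statements merged into one kernel-verified Lean document; each statement's English description precedes it below -/
import Mathlib

section
/- Let n, d be positive integers and let a_1 ≤ … ≤ a_n be integers with 1 ≤ a_i ≤ d for all i and a_1 + … + a_n > d. Then in the ring of formal power series over ℤ: (1 − t)^n · Σ_{i≥0} ( Σ_{S ∈ 𝒮} (−1)^{|S|} C(i(d − ΣS) − |S| + n − 1, n − 1) ) t^i = Σ_{S ∈ 𝒮} (−1)^{|S|} Σ_{j=0}^{|S|} (−1)^j C(|S|, j) (1 − t)^j Σ_{l≥0} A^{n−j, d−ΣS}_{l(d−ΣS)} t^l. In particular the left-hand side is a polynomial in t, namely the h-polynomial of the Veronese-type algebra 𝒱(a_1,…,a_n; d). -/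
open Finset

/-- Binomial coefficient `C(m, k)` for an integer top entry `m`, with the convention
that it vanishes whenever `m < k` (in particular whenever `m < 0`). -/
def ichoose (m : ℤ) (k : ℕ) : ℤ := if m < (k : ℤ) then 0 else (m.toNat).choose k

/-- the integers `A^{N,D}_i` defined by `(1 + T + ⋯ + T^{D−1})^N = Σ_i A^{N,D}_i T^i`. -/
noncomputable def A (N D i : ℕ) : ℕ :=
  ((∑ j ∈ Finset.range D, (Polynomial.X : Polynomial ℕ) ^ j) ^ N).coeff i

section Aux

open PowerSeries

lemma divsum (D i : ℕ) (hD : 0 < D) (f : ℕ → ℤ) :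
    ∑ v ∈ range (i * D + 1), (if D ∣ v then f (v / D) else 0) = ∑ l ∈ range (i + 1), f l := by
  have hsub : (range (i + 1)).image (· * D) ⊆ range (i * D + 1) := by
    intro v hv
    simp only [mem_image, mem_range] at hv ⊢
    obtain ⟨l, hl, rfl⟩ := hv
    have : l * D ≤ i * D := Nat.mul_le_mul_right D (by omega)
    omega
  rw [← Finset.sum_subset hsub]
  · rw [Finset.sum_image (by intro x _ y _ h; exact Nat.eq_of_mul_eq_mul_right hD h)]
    apply Finset.sum_congr rfl
    intro l _
    rw [if_pos (dvd_mul_left D l), Nat.mul_div_cancel _ hD]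
  · intro v hv hv2
    rw [if_neg]
    rintro ⟨l, rfl⟩
    apply hv2
    simp only [mem_image, mem_range] at hv ⊢
    refine ⟨l, ?_, (mul_comm l D).symm ▸ rfl⟩
    have h1 : l * D < i * D + 1 := by rw [mul_comm l D]; exact hv
    by_contra hc
    have : i * D < l * D := (Nat.mul_lt_mul_right hD).2 (by omega)
    omega

noncomputable def tau (D : ℕ) (F : ℤ⟦X⟧) : ℤ⟦X⟧ :=
  PowerSeries.mk fun N => if D ∣ N then PowerSeries.coeff (R := ℤ) (N / D) F else 0

lemma tau_one (D : ℕ) (hD : 0 < D) : tau D 1 = 1 := by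
  ext N
  simp only [tau, coeff_mk, coeff_one]
  rcases Nat.eq_zero_or_pos N with rfl | hN
  · simp
  · have hN0 : ¬ N = 0 := by omega
    rw [if_neg hN0]
    split_ifs with h h2
    · exfalso; obtain ⟨c, rfl⟩ := h
      rw [Nat.mul_div_cancel_left _ hD] at h2
      subst h2
      simp at hN0
    · rfl
    · rfl

lemma tau_mul (D : ℕ) (hD : 0 < D) (F G : ℤ⟦X⟧) :
    tau D (F * G) = tau D F * tau D G := by
  ext N
  rw [coeff_mul]
  simp only [tau, coeff_mk]
  rw [Finset.Nat.sum_antidiagonal_eq_sum_range_succ_mk]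
  simp only [Nat.succ_eq_add_one]
  by_cases hdvd : D ∣ N
  · obtain ⟨M, rfl⟩ := hdvd
    rw [if_pos ⟨M, rfl⟩, Nat.mul_div_cancel_left _ hD, coeff_mul,
      Finset.Nat.sum_antidiagonal_eq_sum_range_succ_mk]
    simp only [Nat.succ_eq_add_one, mul_comm D M]
    have key : ∀ v ∈ range (M * D + 1),
        (if D ∣ v then coeff (R := ℤ) (v / D) F else 0) *
          (if D ∣ M * D - v then coeff (R := ℤ) ((M * D - v) / D) G else 0) =
        (if D ∣ v then coeff (R := ℤ) (v / D) F * coeff (R := ℤ) (M - v / D) G else 0) := by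
      intro v hv
      simp only [mem_range] at hv
      by_cases h : D ∣ v
      · obtain ⟨l, rfl⟩ := h
        rw [mul_comm D l] at hv ⊢
        have hlM : l ≤ M := by
          by_contra hc
          have : M * D < l * D := (Nat.mul_lt_mul_right hD).2 (by omega)
          omega
        have hsub : M * D - l * D = (M - l) * D := (Nat.sub_mul M l D).symm
        rw [if_pos (dvd_mul_left D l), hsub, if_pos (dvd_mul_left D (M - l)),
          if_pos (dvd_mul_left D l)]
        simp [Nat.mul_div_cancel _ hD]
      · rw [if_neg h, if_neg h, zero_mul]
    rw [Finset.sum_congr rfl key, divsum D M hD fun l => coeff (R := ℤ) l F * coeff (R := ℤ) (M - l) G]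
  · rw [if_neg hdvd]
    symm
    apply Finset.sum_eq_zero
    intro v hv
    simp only [mem_range] at hv
    by_cases h : D ∣ v
    · have h2 : ¬ D ∣ N - v := by
        intro hc
        have := Nat.dvd_add h hc
        rw [Nat.add_sub_cancel' (by omega)] at this
        exact hdvd this
      rw [if_neg h2, mul_zero]
    · rw [if_neg h, zero_mul]

lemma tau_pow (D : ℕ) (hD : 0 < D) (F : ℤ⟦X⟧) (m : ℕ) : tau D (F ^ m) = tau D F ^ m := by
  induction m with
  | zero => simpa using tau_one D hD
  | succ m ih => rw [pow_succ, tau_mul D hD, ih, pow_succ]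

lemma tau_one_sub_X (D : ℕ) (hD : 0 < D) : tau D (1 - X) = 1 - X ^ D := by
  ext N
  simp only [tau, coeff_mk, map_sub, coeff_one, coeff_X, coeff_X_pow]
  rcases Nat.eq_zero_or_pos N with rfl | hN
  · simp [hD.ne']
    rw [if_neg (by omega : ¬ (0:ℕ) = D)]
    ring
  · have hN0 : ¬ N = 0 := by omega
    rw [if_neg hN0]
    by_cases h : D ∣ N
    · rw [if_pos h]
      obtain ⟨c, rfl⟩ := h
      have hc : 0 < c := Nat.pos_of_ne_zero (by rintro rfl; simp at hN)
      have h1 : ¬ D * c / D = 0 := by rw [Nat.mul_div_cancel_left _ hD]; omega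
      rw [if_neg h1]
      have : D * c / D = 1 ↔ D * c = D := by
        rw [Nat.mul_div_cancel_left _ hD]
        constructor
        · rintro rfl; simp
        · intro h2; nlinarith
      by_cases h2 : D * c / D = 1
      · rw [if_pos h2, if_pos (this.mp h2)]
      · rw [if_neg h2, if_neg (fun hh => h2 (this.mpr hh))]
    · rw [if_neg h, if_neg (fun hh : N = D => h (hh ▸ dvd_refl D))]
      ring

noncomputable def sec (D : ℕ) (F : ℤ⟦X⟧) : ℤ⟦X⟧ :=
  PowerSeries.mk fun i => PowerSeries.coeff (R := ℤ) (i * D) F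

lemma sec_mul_tau (D : ℕ) (hD : 0 < D) (F G : ℤ⟦X⟧) :
    sec D (F * tau D G) = sec D F * G := by
  ext i
  simp only [sec, coeff_mk, coeff_mul]
  rw [Finset.Nat.sum_antidiagonal_eq_sum_range_succ_mk,
    Finset.Nat.sum_antidiagonal_eq_sum_range_succ_mk]
  simp only [tau, coeff_mk, Nat.succ_eq_add_one]
  rw [← Finset.sum_range_reflect]
  have key : ∀ j ∈ range (i * D + 1),
      coeff (R := ℤ) (i * D + 1 - 1 - j) F *
        (if D ∣ i * D - (i * D + 1 - 1 - j) then
          coeff (R := ℤ) ((i * D - (i * D + 1 - 1 - j)) / D) G else 0) =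
      (if D ∣ j then coeff (R := ℤ) (i * D - (j / D) * D) F * coeff (R := ℤ) (j / D) G else 0) := by
    intro j hj
    simp only [mem_range] at hj
    have h1 : i * D + 1 - 1 - j = i * D - j := by omega
    have h2 : i * D - (i * D - j) = j := by omega
    rw [h1, h2]
    by_cases h : D ∣ j
    · rw [if_pos h, if_pos h, Nat.div_mul_cancel h]
    · rw [if_neg h, if_neg h, mul_zero]
  rw [Finset.sum_congr rfl key,
    divsum D i hD fun l => coeff (R := ℤ) (i * D - l * D) F * coeff (R := ℤ) l G,
    ← Finset.sum_range_reflect]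
  apply Finset.sum_congr rfl
  intro l hl
  simp only [mem_range] at hl
  have h1 : i + 1 - 1 - l = i - l := by omega
  have h2 : i * D - (i - l) * D = l * D := by
    rw [Nat.sub_mul]
    have : l * D ≤ i * D := Nat.mul_le_mul_right D (by omega)
    omega
  rw [h1, h2]

lemma eq_inv_val {m : ℕ} {Y : ℤ⟦X⟧} (h : (1 - X : ℤ⟦X⟧) ^ m * Y = 1) :
    Y = (invOneSubPow ℤ m).val := by
  calc Y = ((invOneSubPow ℤ m).val * (1 - X) ^ m) * Y := by
        rw [← invOneSubPow_inv_eq_one_sub_pow, (invOneSubPow ℤ m).val_inv, one_mul]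
    _ = (invOneSubPow ℤ m).val * ((1 - X) ^ m * Y) := by ring
    _ = (invOneSubPow ℤ m).val := by rw [h, mul_one]

lemma one_sub_pow_mul_inv (m : ℕ) : (1 - X : ℤ⟦X⟧) ^ m * (invOneSubPow ℤ m).val = 1 := by
  rw [← invOneSubPow_inv_eq_one_sub_pow]
  exact (invOneSubPow ℤ m).inv_val

lemma geom_rel (D : ℕ) : (1 - X : ℤ⟦X⟧) * (∑ k ∈ range D, X ^ k) = 1 - X ^ D := by
  have := geom_sum_mul (X : ℤ⟦X⟧) D
  linear_combination -this

lemma coeff_geom_pow (D m N : ℕ) :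
    coeff (R := ℤ) N ((∑ k ∈ range D, X ^ k : ℤ⟦X⟧) ^ m) = (A m D N : ℤ) := by
  have hcast : ((((∑ j ∈ range D, (Polynomial.X : Polynomial ℕ) ^ j) ^ m).map
      (Nat.castRingHom ℤ) : Polynomial ℤ) : ℤ⟦X⟧) = (∑ k ∈ range D, X ^ k : ℤ⟦X⟧) ^ m := by
    rw [← Polynomial.coeToPowerSeries.ringHom_apply, Polynomial.map_pow, map_pow,
      Polynomial.map_sum, map_sum]
    congr 1
    apply Finset.sum_congr rfl
    intro k _
    rw [Polynomial.map_pow, map_pow, Polynomial.map_X,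
      Polynomial.coeToPowerSeries.ringHom_apply, Polynomial.coe_X]
  rw [← hcast, Polynomial.coeff_coe, Polynomial.coeff_map]
  simp [A]

lemma geom_mul_tau_inv (D m : ℕ) (hD : 0 < D) :
    (∑ k ∈ range D, X ^ k : ℤ⟦X⟧) ^ m * tau D (invOneSubPow ℤ m).val
      = (invOneSubPow ℤ m).val := by
  apply eq_inv_val
  calc (1 - X : ℤ⟦X⟧) ^ m * ((∑ k ∈ range D, X ^ k) ^ m * tau D (invOneSubPow ℤ m).val)
      = ((1 - X) * (∑ k ∈ range D, X ^ k)) ^ m * tau D (invOneSubPow ℤ m).val := by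
        rw [mul_pow, ← mul_assoc]
    _ = (1 - X ^ D) ^ m * tau D (invOneSubPow ℤ m).val := by rw [geom_rel]
    _ = tau D ((1 - X) ^ m) * tau D (invOneSubPow ℤ m).val := by
        rw [tau_pow D hD, tau_one_sub_X D hD]
    _ = tau D ((1 - X) ^ m * (invOneSubPow ℤ m).val) := (tau_mul D hD _ _).symm
    _ = tau D 1 := by rw [one_sub_pow_mul_inv]
    _ = 1 := tau_one D hD

lemma sec_inv (D m : ℕ) (hD : 0 < D) :
    sec D (invOneSubPow ℤ m).val =
      PowerSeries.mk (fun l => (A m D (l * D) : ℤ)) * (invOneSubPow ℤ m).val := by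
  conv_lhs => rw [← geom_mul_tau_inv D m hD]
  rw [sec_mul_tau D hD]
  congr 1
  ext l
  simp only [sec, coeff_mk, coeff_geom_pow]

lemma sec_sum {T : Finset ℕ} (D : ℕ) (f : ℕ → ℤ⟦X⟧) :
    sec D (∑ j ∈ T, f j) = ∑ j ∈ T, sec D (f j) := by
  ext i
  simp [sec, map_sum]

lemma sec_C_mul (D : ℕ) (a : ℤ) (F : ℤ⟦X⟧) :
    sec D (C (R := ℤ) a * F) = C (R := ℤ) a * sec D F := by
  ext i
  simp only [sec, coeff_mk, coeff_C_mul]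

lemma mk_ichoose_eq (D s n : ℕ) (hD : 0 < D) (hs : s < n) :
    PowerSeries.mk (fun i => ichoose ((i : ℤ) * D - s + n - 1) (n - 1)) =
      sec D ((X : ℤ⟦X⟧) ^ s * (invOneSubPow ℤ n).val) := by
  ext i
  simp only [coeff_mk, sec, coeff_X_pow_mul',
    invOneSubPow_val_eq_mk_sub_one_add_choose_of_pos ℤ n (by omega), ichoose]
  rw [← Nat.cast_mul]
  split_ifs with h1 h2 h2
  · exfalso; omega
  · rfl
  · have harg : ((i * D : ℕ) - (s : ℤ) + (n : ℤ) - 1).toNat = n - 1 + (i * D - s) := by omega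
    rw [harg]
  · exfalso; omega

lemma X_pow_expand (s : ℕ) :
    (X : ℤ⟦X⟧) ^ s = ∑ j ∈ range (s + 1), C (R := ℤ) ((-1) ^ j * (s.choose j : ℤ)) * (1 - X) ^ j := by
  have hx : (X : ℤ⟦X⟧) = -(1 - X) + 1 := by ring
  rw [hx, add_pow]
  apply Finset.sum_congr rfl
  intro j _
  rw [neg_pow, one_pow, map_mul, map_pow, map_neg, map_one, map_natCast]
  ring

lemma one_sub_pow_mul_val (n j : ℕ) (hj : j ≤ n) :
    (1 - X : ℤ⟦X⟧) ^ j * (invOneSubPow ℤ n).val = (invOneSubPow ℤ (n - j)).val := by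
  apply eq_inv_val
  rw [← mul_assoc, ← pow_add, Nat.sub_add_cancel hj]
  exact one_sub_pow_mul_inv n

lemma key (D s n : ℕ) (hD : 0 < D) (hs : s < n) :
    (1 - X : ℤ⟦X⟧) ^ n * PowerSeries.mk (fun i => ichoose ((i : ℤ) * D - s + n - 1) (n - 1)) =
      ∑ j ∈ range (s + 1), C (R := ℤ) ((-1) ^ j * (s.choose j : ℤ)) * (1 - X) ^ j *
        PowerSeries.mk (fun l => (A (n - j) D (l * D) : ℤ)) := by
  rw [mk_ichoose_eq D s n hD hs, X_pow_expand, Finset.sum_mul]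
  have step : ∀ j ∈ range (s + 1),
      C (R := ℤ) ((-1) ^ j * (s.choose j : ℤ)) * (1 - X : ℤ⟦X⟧) ^ j * (invOneSubPow ℤ n).val =
      C (R := ℤ) ((-1) ^ j * (s.choose j : ℤ)) * (invOneSubPow ℤ (n - j)).val := by
    intro j hj
    simp only [mem_range] at hj
    rw [mul_assoc, one_sub_pow_mul_val n j (by omega)]
  rw [Finset.sum_congr rfl step, sec_sum, Finset.mul_sum]
  apply Finset.sum_congr rfl
  intro j hj
  simp only [mem_range] at hj
  rw [sec_C_mul, sec_inv D (n - j) hD]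
  have hsplit : (1 - X : ℤ⟦X⟧) ^ n = (1 - X) ^ j * (1 - X) ^ (n - j) := by
    rw [← pow_add]
    congr 1
    omega
  rw [hsplit]
  have : (1 - X : ℤ⟦X⟧) ^ j * (1 - X) ^ (n - j) *
      (C (R := ℤ) ((-1) ^ j * (s.choose j : ℤ)) *
        (PowerSeries.mk (fun l => (A (n - j) D (l * D) : ℤ)) * (invOneSubPow ℤ (n - j)).val)) =
      C (R := ℤ) ((-1) ^ j * (s.choose j : ℤ)) * (1 - X) ^ j *
        PowerSeries.mk (fun l => (A (n - j) D (l * D) : ℤ)) *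
        ((1 - X) ^ (n - j) * (invOneSubPow ℤ (n - j)).val) := by ring
  rw [this, one_sub_pow_mul_inv, mul_one]

lemma A_eq_zero (m D l : ℕ) (hD : 0 < D) (hm : 0 < m) (hl : m ≤ l) : A m D (l * D) = 0 := by
  unfold A
  apply Polynomial.coeff_eq_zero_of_natDegree_lt
  have hdeg : ((∑ j ∈ range D, (Polynomial.X : Polynomial ℕ) ^ j) ^ m).natDegree ≤ m * (D - 1) := by
    refine (Polynomial.natDegree_pow_le).trans ?_
    apply Nat.mul_le_mul_left
    apply Polynomial.natDegree_sum_le_of_forall_le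
    intro j hj
    simp only [mem_range] at hj
    rw [Polynomial.natDegree_X_pow]
    omega
  have h3 : m * (D - 1) < m * D := mul_lt_mul_of_pos_left (by omega) hm
  have h2 : m * D ≤ l * D := Nat.mul_le_mul_right D hl
  omega

noncomputable def PA (m D : ℕ) : Polynomial ℤ :=
  ∑ l ∈ range m, Polynomial.C (A m D (l * D) : ℤ) * Polynomial.X ^ l

lemma mkA_eq (m D : ℕ) (hD : 0 < D) (hm : 0 < m) :
    PowerSeries.mk (fun l => (A m D (l * D) : ℤ)) = ((PA m D : Polynomial ℤ) : ℤ⟦X⟧) := by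
  ext N
  rw [coeff_mk, Polynomial.coeff_coe, PA, Polynomial.finset_sum_coeff]
  simp only [Polynomial.coeff_C_mul, Polynomial.coeff_X_pow, mul_ite, mul_one, mul_zero]
  rw [Finset.sum_ite_eq (range m) N fun l => ((A m D (l * D) : ℤ))]
  by_cases h : N ∈ range m
  · rw [if_pos h]
  · rw [if_neg h]
    simp only [mem_range, not_lt] at h
    rw [A_eq_zero m D N hD hm h, Nat.cast_zero]

end Aux

open PowerSeries

/-- The h-polynomial of the Veronese-type algebra `𝒱(a₁,…,aₙ; d)`: in `ℤ⟦t⟧`,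
`(1 − t)^n` times the Hilbert series
`Σ_i (Σ_{S∈𝒮} (−1)^{|S|} C(i(d−ΣS)−|S|+n−1, n−1)) t^i` equals
`Σ_{S∈𝒮} (−1)^{|S|} Σ_{j=0}^{|S|} (−1)^j C(|S|,j) (1−t)^j Σ_{l≥0} A^{n−j,d−ΣS}_{l(d−ΣS)} t^l`;
in particular the left-hand side is a polynomial in `t`. -/
theorem h_polynomial_veronese_type
    (n d : ℕ) (hn : 0 < n) (hd : 0 < d) (a : Fin n → ℕ)
    (hmono : Monotone a) (h1 : ∀ j, 1 ≤ a j) (hle : ∀ j, a j ≤ d)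
    (hsum : d < ∑ j, a j) :
    ((1 - PowerSeries.X : PowerSeries ℤ) ^ n *
        PowerSeries.mk (fun i =>
          ∑ S ∈ Finset.univ.powerset.filter (fun S : Finset (Fin n) => ∑ j ∈ S, a j < d),
            (-1 : ℤ) ^ S.card *
              ichoose ((i : ℤ) * ((d : ℤ) - ∑ j ∈ S, (a j : ℤ)) - S.card + n - 1) (n - 1)) =
      ∑ S ∈ Finset.univ.powerset.filter (fun S : Finset (Fin n) => ∑ j ∈ S, a j < d),
        ∑ j ∈ Finset.range (S.card + 1),
          PowerSeries.C (R := ℤ) ((-1) ^ S.card * (-1) ^ j * (S.card.choose j)) *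
            (1 - PowerSeries.X) ^ j *
            PowerSeries.mk (fun l =>
              (A (n - j) (d - ∑ k ∈ S, a k) (l * (d - ∑ k ∈ S, a k)) : ℤ))) ∧
    ∃ p : Polynomial ℤ,
      (1 - PowerSeries.X : PowerSeries ℤ) ^ n *
        PowerSeries.mk (fun i =>
          ∑ S ∈ Finset.univ.powerset.filter (fun S : Finset (Fin n) => ∑ j ∈ S, a j < d),
            (-1 : ℤ) ^ S.card *
              ichoose ((i : ℤ) * ((d : ℤ) - ∑ j ∈ S, (a j : ℤ)) - S.card + n - 1) (n - 1)) =
        (p : PowerSeries ℤ) := by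
  set 𝒮 := Finset.univ.powerset.filter (fun S : Finset (Fin n) => ∑ j ∈ S, a j < d) with h𝒮
  -- basic facts about each S ∈ 𝒮
  have hcard : ∀ S ∈ 𝒮, S.card < n := by
    intro S hS
    obtain ⟨-, hSlt⟩ := Finset.mem_filter.mp hS
    rcases lt_or_eq_of_le (Finset.card_le_univ S) with h | h
    · simpa using h
    · exfalso
      have : S = Finset.univ := Finset.eq_univ_of_card S (by simpa using h)
      subst this
      omega
  have hD : ∀ S ∈ 𝒮, 0 < d - ∑ k ∈ S, a k := by
    intro S hS
    obtain ⟨-, hSlt⟩ := Finset.mem_filter.mp hS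
    omega
  -- rewrite the inner `ichoose` argument using the natural number `D`
  have hfirst : (1 - PowerSeries.X : PowerSeries ℤ) ^ n *
        PowerSeries.mk (fun i =>
          ∑ S ∈ 𝒮, (-1 : ℤ) ^ S.card *
              ichoose ((i : ℤ) * ((d : ℤ) - ∑ j ∈ S, (a j : ℤ)) - S.card + n - 1) (n - 1)) =
      ∑ S ∈ 𝒮, ∑ j ∈ Finset.range (S.card + 1),
          PowerSeries.C (R := ℤ) ((-1) ^ S.card * (-1) ^ j * (S.card.choose j)) *
            (1 - PowerSeries.X) ^ j *
            PowerSeries.mk (fun l =>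
              (A (n - j) (d - ∑ k ∈ S, a k) (l * (d - ∑ k ∈ S, a k)) : ℤ)) := by
    have hmk : PowerSeries.mk (fun i =>
          ∑ S ∈ 𝒮, (-1 : ℤ) ^ S.card *
              ichoose ((i : ℤ) * ((d : ℤ) - ∑ j ∈ S, (a j : ℤ)) - S.card + n - 1) (n - 1)) =
        ∑ S ∈ 𝒮, PowerSeries.mk (fun i => (-1 : ℤ) ^ S.card *
              ichoose ((i : ℤ) * ((d : ℤ) - ∑ j ∈ S, (a j : ℤ)) - S.card + n - 1) (n - 1)) := by
      ext i
      simp [coeff_mk]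
    rw [hmk, Finset.mul_sum]
    apply Finset.sum_congr rfl
    intro S hS
    obtain ⟨-, hSlt⟩ := Finset.mem_filter.mp hS
    have hcast : ((d - ∑ k ∈ S, a k : ℕ) : ℤ) = (d : ℤ) - ∑ j ∈ S, (a j : ℤ) := by
      push_cast [Nat.cast_sub (le_of_lt hSlt)]
      ring
    have hmk2 : PowerSeries.mk (fun i => (-1 : ℤ) ^ S.card *
          ichoose ((i : ℤ) * ((d : ℤ) - ∑ j ∈ S, (a j : ℤ)) - S.card + n - 1) (n - 1)) =
        PowerSeries.C (R := ℤ) ((-1 : ℤ) ^ S.card) * PowerSeries.mk (fun i =>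
          ichoose ((i : ℤ) * ((d - ∑ k ∈ S, a k : ℕ) : ℤ) - S.card + n - 1) (n - 1)) := by
      ext i
      rw [coeff_mk, coeff_C_mul, coeff_mk, hcast]
    rw [hmk2]
    have hkey := key (d - ∑ k ∈ S, a k) S.card n (hD S hS) (hcard S hS)
    calc (1 - PowerSeries.X : PowerSeries ℤ) ^ n *
          (PowerSeries.C (R := ℤ) ((-1 : ℤ) ^ S.card) * PowerSeries.mk (fun i =>
            ichoose ((i : ℤ) * ((d - ∑ k ∈ S, a k : ℕ) : ℤ) - S.card + n - 1) (n - 1)))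
        = PowerSeries.C (R := ℤ) ((-1 : ℤ) ^ S.card) * ((1 - PowerSeries.X) ^ n *
            PowerSeries.mk (fun i =>
              ichoose ((i : ℤ) * ((d - ∑ k ∈ S, a k : ℕ) : ℤ) - S.card + n - 1) (n - 1))) := by
          ring
      _ = PowerSeries.C (R := ℤ) ((-1 : ℤ) ^ S.card) *
            ∑ j ∈ Finset.range (S.card + 1),
              PowerSeries.C (R := ℤ) ((-1) ^ j * (S.card.choose j : ℤ)) * (1 - PowerSeries.X) ^ j *
                PowerSeries.mk (fun l =>
                  (A (n - j) (d - ∑ k ∈ S, a k) (l * (d - ∑ k ∈ S, a k)) : ℤ)) := by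
          rw [hkey]
      _ = _ := by
          rw [Finset.mul_sum]
          apply Finset.sum_congr rfl
          intro j hj
          have hc : ((-1 : ℤ) ^ S.card * (-1) ^ j * (S.card.choose j : ℤ)) =
              (-1 : ℤ) ^ S.card * ((-1) ^ j * (S.card.choose j : ℤ)) := by ring
          rw [hc]
          simp only [map_mul]
          ring
  refine ⟨hfirst, ?_⟩
  refine ⟨∑ S ∈ 𝒮, ∑ j ∈ Finset.range (S.card + 1),
      Polynomial.C ((-1 : ℤ) ^ S.card * (-1) ^ j * (S.card.choose j : ℤ)) *
        (1 - Polynomial.X) ^ j * PA (n - j) (d - ∑ k ∈ S, a k), ?_⟩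
  rw [hfirst, ← Polynomial.coeToPowerSeries.ringHom_apply, map_sum]
  apply Finset.sum_congr rfl
  intro S hS
  rw [map_sum]
  apply Finset.sum_congr rfl
  intro j hj
  simp only [mem_range] at hj
  rw [mkA_eq (n - j) (d - ∑ k ∈ S, a k) (hD S hS) (by have := hcard S hS; omega)]
  conv_rhs => rw [map_mul, map_mul, map_pow, map_sub, map_one]
  simp only [Polynomial.coeToPowerSeries.ringHom_apply, Polynomial.coe_C, Polynomial.coe_X]
end

section
/- Let n > d ≥ 1 be integers and, for i ≥ 0, let H(i) be the number of tuples (α_1,…,α_n) of non-negative integers with α_1 + … + α_n = i·d and α_j ≤ i for all j. Then in the ring of formal power series over ℤ: (1 − t)^n · Σ_{i≥0} H(i) t^i = Σ_{s=0}^{d−1} (−1)^s C(n, s) Σ_{j=0}^{s} (−1)^j C(s, j) (1 − t)^j Σ_{l≥0} A^{n−j, d−s}_{l(d−s)} t^l. -/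
open Finset

open PowerSeries

noncomputable def gg (N : ℕ) : PowerSeries ℤ := PowerSeries.mk fun m => ((m + N).choose N : ℤ)

lemma one_sub_X_mul_gg (N : ℕ) : (1 - PowerSeries.X) * gg (N + 1) = gg N := by
  ext m
  rw [sub_mul, one_mul, map_sub]
  cases m with
  | zero => simp [gg, PowerSeries.coeff_zero_X_mul]
  | succ m =>
      rw [PowerSeries.coeff_succ_X_mul]
      simp only [gg, PowerSeries.coeff_mk]
      have h1 : (m + 1 + (N + 1)).choose (N + 1)
          = (m + (N+1)).choose N + (m + (N+1)).choose (N+1) := by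
        rw [show m + 1 + (N + 1) = (m + (N+1)) + 1 from by omega, Nat.choose_succ_succ']
      rw [h1, show m + 1 + N = m + (N + 1) from by omega]
      push_cast; ring

lemma gg_inv (N : ℕ) : (1 - PowerSeries.X) ^ (N + 1) * gg N = 1 := by
  induction N with
  | zero =>
      ext m
      rw [pow_one, sub_mul, one_mul, map_sub]
      cases m with
      | zero => simp [gg]
      | succ m => simp [gg, PowerSeries.coeff_succ_X_mul, PowerSeries.coeff_one]
  | succ N ih =>
      have h : (1 - PowerSeries.X : PowerSeries ℤ) ^ (N + 1 + 1) * gg (N + 1)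
          = (1 - PowerSeries.X) ^ (N + 1) * ((1 - PowerSeries.X) * gg (N + 1)) := by ring
      rw [h, one_sub_X_mul_gg, ih]

lemma one_sub_pow_expand (e N : ℕ) :
    (1 - PowerSeries.X ^ e : PowerSeries ℤ) ^ N
      = ∑ k ∈ range (N + 1),
          PowerSeries.C ((-1) ^ k * (N.choose k : ℤ)) * PowerSeries.X ^ (e * k) := by
  rw [sub_eq_add_neg, add_comm, add_pow]
  refine Finset.sum_congr rfl fun k hk => ?_
  rw [one_pow, mul_one, neg_pow, pow_mul]
  simp only [map_mul, map_pow, map_neg, map_one, map_natCast]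
  ring

lemma coeff_one_sub_X_pow (N k : ℕ) :
    (PowerSeries.coeff k) ((1 - PowerSeries.X) ^ N) = (-1) ^ k * (N.choose k : ℤ) := by
  have := one_sub_pow_expand 1 N
  rw [pow_one] at this
  rw [this, map_sum]
  simp only [PowerSeries.coeff_C_mul, PowerSeries.coeff_X_pow, one_mul, mul_ite, mul_one, mul_zero]
  rw [Finset.sum_ite_eq (range (N + 1)) k fun k' => (-1 : ℤ) ^ k' * (N.choose k' : ℤ)]
  split
  · rfl
  · next h =>
      rw [Nat.choose_eq_zero_of_lt (by simp at h; omega)]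
      simp

lemma one_sub_X_mul_geom (e : ℕ) :
    (1 - PowerSeries.X : PowerSeries ℤ) * ∑ j ∈ range e, PowerSeries.X ^ j
      = 1 - PowerSeries.X ^ e := by
  have := geom_sum_mul (PowerSeries.X : PowerSeries ℤ) e
  have h2 : ((∑ i ∈ range e, PowerSeries.X ^ i) * (PowerSeries.X - 1) : PowerSeries ℤ)
      = -((1 - PowerSeries.X) * ∑ j ∈ range e, PowerSeries.X ^ j) := by ring
  rw [h2] at this
  linear_combination -this

lemma one_sub_X_ne : (1 - PowerSeries.X : PowerSeries ℤ) ≠ 0 := by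
  intro h
  have := congrArg (PowerSeries.constantCoeff) h
  simp at this

lemma sumXpow_eq (N e : ℕ) :
    ((∑ j ∈ range e, PowerSeries.X ^ j : PowerSeries ℤ)) ^ (N + 1)
      = (1 - PowerSeries.X ^ e) ^ (N + 1) * gg N := by
  apply mul_left_cancel₀ (pow_ne_zero (N + 1) one_sub_X_ne)
  calc (1 - PowerSeries.X : PowerSeries ℤ) ^ (N+1) * (∑ j ∈ range e, PowerSeries.X ^ j) ^ (N+1)
      = ((1 - PowerSeries.X) * ∑ j ∈ range e, PowerSeries.X ^ j) ^ (N+1) := by rw [mul_pow]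
    _ = (1 - PowerSeries.X ^ e) ^ (N+1) := by rw [one_sub_X_mul_geom]
    _ = (1 - PowerSeries.X ^ e) ^ (N+1) * ((1 - PowerSeries.X) ^ (N+1) * gg N) := by
        rw [gg_inv, mul_one]
    _ = (1 - PowerSeries.X) ^ (N+1) * ((1 - PowerSeries.X ^ e) ^ (N+1) * gg N) := by ring

lemma count_powerseries (N e m : ℕ) :
    (PowerSeries.coeff m) ((∑ j ∈ range e, PowerSeries.X ^ j : PowerSeries ℤ) ^ N)
      = ((Finset.filter (fun f : Fin N → ℕ => ∑ k, f k = m)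
          (Fintype.piFinset fun _ => Finset.range e)).card : ℤ) := by
  have h : ((∑ j ∈ range e, PowerSeries.X ^ j : PowerSeries ℤ)) ^ N
      = ∑ f ∈ Fintype.piFinset (fun _ : Fin N => Finset.range e),
          PowerSeries.X ^ (∑ k, f k) := by
    calc ((∑ j ∈ range e, PowerSeries.X ^ j : PowerSeries ℤ)) ^ N
        = ∏ _k : Fin N, (∑ j ∈ range e, PowerSeries.X ^ j : PowerSeries ℤ) := by
          rw [Finset.prod_const]; simp
      _ = ∑ f ∈ Fintype.piFinset (fun _ : Fin N => Finset.range e),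
            ∏ k : Fin N, PowerSeries.X ^ (f k) := by rw [Finset.prod_univ_sum]
      _ = _ := by
          refine Finset.sum_congr rfl fun f _ => ?_
          rw [Finset.prod_pow_eq_pow_sum]
  rw [h, map_sum]
  simp only [PowerSeries.coeff_X_pow]
  rw [Finset.card_filter]
  push_cast
  refine Finset.sum_congr rfl fun f _ => ?_
  simp [eq_comm]

lemma count_polynomial (N e m : ℕ) :
    (((∑ j ∈ range e, (Polynomial.X : Polynomial ℕ) ^ j) ^ N).coeff m)
      = (Finset.filter (fun f : Fin N → ℕ => ∑ k, f k = m)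
          (Fintype.piFinset fun _ => Finset.range e)).card := by
  have h : ((∑ j ∈ range e, (Polynomial.X : Polynomial ℕ) ^ j)) ^ N
      = ∑ f ∈ Fintype.piFinset (fun _ : Fin N => Finset.range e),
          (Polynomial.X : Polynomial ℕ) ^ (∑ k, f k) := by
    calc ((∑ j ∈ range e, (Polynomial.X : Polynomial ℕ) ^ j)) ^ N
        = ∏ _k : Fin N, (∑ j ∈ range e, (Polynomial.X : Polynomial ℕ) ^ j) := by
          rw [Finset.prod_const]; simp
      _ = ∑ f ∈ Fintype.piFinset (fun _ : Fin N => Finset.range e),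
            ∏ k : Fin N, (Polynomial.X : Polynomial ℕ) ^ (f k) := by rw [Finset.prod_univ_sum]
      _ = _ := by
          refine Finset.sum_congr rfl fun f _ => ?_
          rw [Finset.prod_pow_eq_pow_sum]
  rw [h, Polynomial.finset_sum_coeff]
  rw [Finset.card_filter]
  refine Finset.sum_congr rfl fun f _ => ?_
  simp [Polynomial.coeff_X_pow, eq_comm]

lemma A_cast (N e m : ℕ) :
    (A N e m : ℤ)
      = (PowerSeries.coeff m) ((∑ j ∈ range e, PowerSeries.X ^ j : PowerSeries ℤ) ^ N) := by
  rw [A, count_polynomial, count_powerseries]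

lemma Acoeff (N e m : ℕ) :
    (A (N + 1) e m : ℤ)
      = ∑ k ∈ range (N + 2), (-1) ^ k * ((N + 1).choose k : ℤ) *
          (if e * k ≤ m then ((m - e * k + N).choose N : ℤ) else 0) := by
  rw [A_cast, sumXpow_eq, one_sub_pow_expand, Finset.sum_mul, map_sum]
  refine Finset.sum_congr rfl fun k hk => ?_
  rw [mul_assoc, PowerSeries.coeff_C_mul, PowerSeries.coeff_X_pow_mul']
  simp only [gg, PowerSeries.coeff_mk]

lemma L2 (s : ℕ) : ∀ K M : ℕ, s ≤ K → K ≤ M →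
    ∑ j ∈ range (s + 1), (-1 : ℤ) ^ j * (s.choose j : ℤ) * ((M - j).choose (K - j) : ℤ)
      = ((M - s).choose K : ℤ) := by
  induction s with
  | zero => intro K M _ _; simp
  | succ s ih =>
      intro K M hsK hKM
      have pascalZ : ∀ a b : ℕ, ((a + 1).choose (b + 1) : ℤ) = a.choose b + a.choose (b + 1) := by
        intro a b; exact_mod_cast Nat.choose_succ_succ a b
      have hP : ∑ j ∈ range (s + 1),
            (-1 : ℤ) ^ j * (s.choose j : ℤ) * (((M - 1) - j).choose ((K - 1) - j) : ℤ)
          = (((M - 1) - s).choose (K - 1) : ℤ) := ih (K - 1) (M - 1) (by omega) (by omega)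
      have hT : ∑ j ∈ range (s + 1),
            (-1 : ℤ) ^ j * (s.choose j : ℤ) * ((M - j).choose (K - j) : ℤ)
          = ((M - s).choose K : ℤ) := ih K M (by omega) (by omega)
      have e2' := Finset.sum_range_succ'
        (fun j => (-1 : ℤ) ^ j * (s.choose j : ℤ) * ((M - j).choose (K - j) : ℤ)) (s + 1)
      have e2 : ∑ j ∈ range (s + 1 + 1),
            (-1 : ℤ) ^ j * (s.choose j : ℤ) * ((M - j).choose (K - j) : ℤ)
          = ((M - s).choose K : ℤ) := by
        rw [Finset.sum_range_succ, Nat.choose_succ_self, hT]; simp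
      rw [e2] at e2'
      have e1 := Finset.sum_range_succ'
        (fun j => (-1 : ℤ) ^ j * ((s + 1).choose j : ℤ) * ((M - j).choose (K - j) : ℤ)) (s + 1)
      rw [e1]
      have congr1 : ∑ j ∈ range (s + 1),
            (-1 : ℤ) ^ (j + 1) * ((s + 1).choose (j + 1) : ℤ) * ((M - (j + 1)).choose (K - (j + 1)) : ℤ)
          = ∑ j ∈ range (s + 1),
              (-((-1 : ℤ) ^ j * (s.choose j : ℤ) * (((M - 1) - j).choose ((K - 1) - j) : ℤ))
               + -((-1 : ℤ) ^ j * (s.choose (j + 1) : ℤ) * ((M - (j + 1)).choose (K - (j + 1)) : ℤ))) := by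
        refine Finset.sum_congr rfl fun j _ => ?_
        rw [pascalZ s j, show M - (j + 1) = (M - 1) - j from by omega,
            show K - (j + 1) = (K - 1) - j from by omega]
        ring
      have congr2 : ∑ j ∈ range (s + 1),
            (-1 : ℤ) ^ (j + 1) * (s.choose (j + 1) : ℤ) * ((M - (j + 1)).choose (K - (j + 1)) : ℤ)
          = ∑ j ∈ range (s + 1),
              -((-1 : ℤ) ^ j * (s.choose (j + 1) : ℤ) * ((M - (j + 1)).choose (K - (j + 1)) : ℤ)) := by
        refine Finset.sum_congr rfl fun j _ => ?_; ring
      rw [congr2] at e2'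
      rw [congr1, Finset.sum_add_distrib, Finset.sum_neg_distrib, Finset.sum_neg_distrib, hP]
      rw [Finset.sum_neg_distrib] at e2'
      have pasc : (M - s).choose K = (M - (s + 1)).choose (K - 1) + (M - (s + 1)).choose K := by
        have h := Nat.choose_succ_succ (M - (s + 1)) (K - 1)
        simpa [Nat.succ_eq_add_one, show M - (s + 1) + 1 = M - s from by omega,
          show K - 1 + 1 = K from by omega] using h
      have pascZ : ((M - s).choose K : ℤ)
          = ((M - (s + 1)).choose (K - 1) : ℤ) + ((M - (s + 1)).choose K : ℤ) := by
        exact_mod_cast congrArg (Nat.cast : ℕ → ℤ) pasc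
      rw [show (M - 1) - s = M - (s + 1) from by omega] at hP ⊢
      simp only [pow_zero, Nat.choose_zero_right, Nat.cast_one, one_mul, mul_one,
        Nat.sub_zero] at e2' ⊢
      linarith [e2', pascZ]

lemma Hstar (n d : ℕ) (hd : 1 ≤ d) (hdn : d < n) (i : ℕ) :
    ((Finset.filter (fun α : Fin n → ℕ => ∑ j, α j = i * d)
        (Fintype.piFinset fun _ => Finset.range (i + 1))).card : ℤ)
      = ∑ s ∈ range d, (-1 : ℤ) ^ s * (n.choose s : ℤ) *
          ((i * (d - s) + (n - 1) - s).choose (n - 1) : ℤ) := by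
  obtain ⟨N, rfl⟩ : ∃ N, n = N + 1 := ⟨n - 1, by omega⟩
  rw [← count_polynomial (N + 1) (i + 1) (i * d)]
  rw [show (((∑ j ∈ range (i+1), (Polynomial.X : Polynomial ℕ) ^ j) ^ (N+1)).coeff (i*d))
      = A (N + 1) (i + 1) (i * d) from rfl]
  rw [Acoeff]
  have hsub : range d ⊆ range (N + 2) := by
    intro x hx; simp only [Finset.mem_range] at *; omega
  rw [← Finset.sum_subset hsub (fun k _ hk => ?_)]
  · refine Finset.sum_congr rfl fun k hk => ?_
    simp only [Finset.mem_range] at hk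
    have h1 : i * (d - k) + i * k = i * d := by rw [← Nat.mul_add]; congr 1; omega
    have h2 : (i + 1) * k = i * k + k := by ring
    by_cases h : (i + 1) * k ≤ i * d
    · rw [if_pos h, show i * d - (i + 1) * k + N = i * (d - k) + N - k from by omega,
        show (N + 1) - 1 = N from by omega]
    · rw [if_neg h, show (N + 1) - 1 = N from by omega,
        Nat.choose_eq_zero_of_lt (show i * (d - k) + N - k < N from by omega)]
      simp
  · -- vanishing outside range d
    simp only [Finset.mem_range, not_lt] at hk
    have : i * d < (i + 1) * k :=
      calc i * d < i * d + d := by omega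
        _ = (i + 1) * d := by ring
        _ ≤ (i + 1) * k := Nat.mul_le_mul_left _ hk
    rw [if_neg (by omega), mul_zero]

lemma Aseries (N e : ℕ) (he : 1 ≤ e) :
    PowerSeries.mk (fun l => (A (N + 1) e (l * e) : ℤ))
      = (1 - PowerSeries.X) ^ (N + 1)
          * PowerSeries.mk (fun i => ((i * e + N).choose N : ℤ)) := by
  ext l
  rw [PowerSeries.coeff_mk, Acoeff, PowerSeries.coeff_mul,
    Finset.Nat.sum_antidiagonal_eq_sum_range_succ_mk]
  simp only [coeff_one_sub_X_pow, PowerSeries.coeff_mk]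
  have hL : ∑ k ∈ range (N + 2), (-1 : ℤ) ^ k * ((N + 1).choose k : ℤ) *
        (if e * k ≤ l * e then ((l * e - e * k + N).choose N : ℤ) else 0)
      = ∑ k ∈ range (N + l + 2), (-1 : ℤ) ^ k * ((N + 1).choose k : ℤ) *
          (if k ≤ l then (((l - k) * e + N).choose N : ℤ) else 0) := by
    rw [Finset.sum_subset (Finset.range_subset_range.2 (by omega : N + 2 ≤ N + l + 2))
      (fun k _ hk => ?_)]
    · refine Finset.sum_congr rfl fun k _ => ?_
      congr 1
      have hiff : e * k ≤ l * e ↔ k ≤ l := by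
        constructor
        · intro h; exact Nat.le_of_mul_le_mul_left (by rwa [Nat.mul_comm l e] at h) (by omega)
        · intro h; calc e * k ≤ e * l := Nat.mul_le_mul_left _ h
            _ = l * e := by ring
      rw [if_congr hiff rfl rfl]
      congr 1
      rw [Nat.sub_mul l k e, show e * k = k * e from by ring]
    · simp only [Finset.mem_range, not_lt] at hk
      rw [Nat.choose_eq_zero_of_lt (show N + 1 < k from by omega)]
      simp
  rw [hL]
  have hR : ∑ k ∈ range (l + 1), (-1 : ℤ) ^ k * ((N + 1).choose k : ℤ) *
        (((l - k) * e + N).choose N : ℤ)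
      = ∑ k ∈ range (N + l + 2), (-1 : ℤ) ^ k * ((N + 1).choose k : ℤ) *
          (if k ≤ l then (((l - k) * e + N).choose N : ℤ) else 0) := by
    have step1 : ∑ k ∈ range (l + 1), (-1 : ℤ) ^ k * ((N + 1).choose k : ℤ) *
          (((l - k) * e + N).choose N : ℤ)
        = ∑ k ∈ range (l + 1), (-1 : ℤ) ^ k * ((N + 1).choose k : ℤ) *
            (if k ≤ l then (((l - k) * e + N).choose N : ℤ) else 0) := by
      refine Finset.sum_congr rfl fun k hk => ?_
      simp only [Finset.mem_range] at hk
      rw [if_pos (by omega : k ≤ l)]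
    rw [step1]
    refine Finset.sum_subset (Finset.range_subset_range.2 (by omega : l + 1 ≤ N + l + 2))
      (fun k _ hk => ?_)
    simp only [Finset.mem_range, not_lt] at hk
    rw [if_neg (by omega), mul_zero]
  rw [hR]

/-- The Hilbert series of `𝒱(1,…,1; d)` (the monomial algebra of the `d`-th
hypersimplex): with `H(i)` the number of tuples `(α₁,…,αₙ)` of non-negative integers
with `Σ αⱼ = i·d` and `αⱼ ≤ i`, in `ℤ⟦t⟧` one has
`(1−t)^n Σ_i H(i) t^i = Σ_{s=0}^{d−1} (−1)^s C(n,s) Σ_{j=0}^s (−1)^j C(s,j) (1−t)^j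
Σ_{l≥0} A^{n−j,d−s}_{l(d−s)} t^l`. -/
theorem hilbert_series_hypersimplex
    (n d : ℕ) (hd : 1 ≤ d) (hdn : d < n) :
    (1 - PowerSeries.X : PowerSeries ℤ) ^ n *
        PowerSeries.mk (fun i =>
          ((Finset.filter (fun α : Fin n → ℕ => ∑ j, α j = i * d)
              (Fintype.piFinset fun _ => Finset.range (i + 1))).card : ℤ)) =
      ∑ s ∈ Finset.range d, ∑ j ∈ Finset.range (s + 1),
        (PowerSeries.C : ℤ →+* PowerSeries ℤ) ((-1) ^ s * (n.choose s) * (-1) ^ j * (s.choose j)) *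
          (1 - PowerSeries.X) ^ j *
          PowerSeries.mk (fun l => (A (n - j) (d - s) (l * (d - s)) : ℤ)) := by
  have hA : (PowerSeries.mk (fun i =>
        ((Finset.filter (fun α : Fin n → ℕ => ∑ j, α j = i * d)
            (Fintype.piFinset fun _ => Finset.range (i + 1))).card : ℤ)))
      = ∑ s ∈ range d, PowerSeries.C ((-1) ^ s * (n.choose s : ℤ)) *
          PowerSeries.mk (fun i => ((i * (d - s) + (n - 1) - s).choose (n - 1) : ℤ)) := by
    ext i
    rw [PowerSeries.coeff_mk, map_sum]
    simp only [PowerSeries.coeff_C_mul, PowerSeries.coeff_mk]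
    exact Hstar n d hd hdn i
  rw [hA, Finset.mul_sum]
  refine Finset.sum_congr rfl fun s hs => ?_
  simp only [Finset.mem_range] at hs
  have inner : ∑ j ∈ range (s + 1), PowerSeries.C ((-1) ^ j * (s.choose j : ℤ)) *
        PowerSeries.mk (fun i => ((i * (d - s) + (n - j - 1)).choose (n - j - 1) : ℤ))
      = PowerSeries.mk (fun i => ((i * (d - s) + (n - 1) - s).choose (n - 1) : ℤ)) := by
    ext i
    rw [map_sum]
    simp only [PowerSeries.coeff_C_mul, PowerSeries.coeff_mk]
    have hL2 := L2 s (n - 1) (i * (d - s) + (n - 1)) (by omega) (by omega)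
    rw [← hL2]
    refine Finset.sum_congr rfl fun j hj => ?_
    simp only [Finset.mem_range] at hj
    have e1 : i * (d - s) + (n - j - 1) = i * (d - s) + (n - 1) - j := by omega
    have e2 : n - j - 1 = (n - 1) - j := by omega
    rw [e1, e2]
  have hterm : ∀ j ∈ range (s + 1),
      (PowerSeries.C : ℤ →+* PowerSeries ℤ) ((-1) ^ s * (n.choose s) * (-1) ^ j * (s.choose j)) *
          (1 - PowerSeries.X) ^ j *
          PowerSeries.mk (fun l => (A (n - j) (d - s) (l * (d - s)) : ℤ))
        = PowerSeries.C ((-1) ^ s * (n.choose s : ℤ)) *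
            ((1 - PowerSeries.X) ^ n *
              (PowerSeries.C ((-1) ^ j * (s.choose j : ℤ)) *
                PowerSeries.mk (fun i =>
                  ((i * (d - s) + (n - j - 1)).choose (n - j - 1) : ℤ)))) := by
    intro j hj
    simp only [Finset.mem_range] at hj
    have hAs := Aseries (n - j - 1) (d - s) (by omega)
    rw [show n - j - 1 + 1 = n - j from by omega] at hAs
    rw [hAs]
    have hpow : (1 - PowerSeries.X : PowerSeries ℤ) ^ j * (1 - PowerSeries.X) ^ (n - j)
        = (1 - PowerSeries.X) ^ n := by
      rw [← pow_add]; congr 1; omega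
    rw [show ((-1 : ℤ) ^ s * (n.choose s : ℤ) * (-1) ^ j * (s.choose j : ℤ))
        = ((-1 : ℤ) ^ s * (n.choose s : ℤ)) * ((-1 : ℤ) ^ j * (s.choose j : ℤ)) from by ring,
      map_mul, ← hpow]
    ring
  rw [Finset.sum_congr rfl hterm, ← Finset.mul_sum, ← Finset.mul_sum, inner]
  ring
end
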